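/- Let I ⊆ ℝ∖{0,1} be an open interval and let F₁₂, F₁₃, F₂₃ : I → ℝ be differentiable functions satisfying F₁₂′(z) = F₁₃(z)F₂₃(z)/(z(z−1)), F₁₃′(z) = −F₁₂(z)F₂₃(z)/(z−1), F₂₃′(z) = F₁₂(z)F₁₃(z)/z on I, and let R² denote the constant value of F₁₂² + F₁₃² + F₂₃². Define σ : I → ℝ by σ(z) = z·F₁₂(z)² + F₁₃(z)² − R²/2. Then σ′(z) = F₁₂(z)² on I, and σ satisfies the sigma form of the Painlevé VI equation: z²(z−1)²(σ″)² + 4[σ′(zσ′−σ)² − (σ′)²(zσ′−σ)] = −2R²(σ′)² + R⁴σ′ on I. -/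

import Mathlib

/-- for solutions of the reduced Darboux–Egorov system with first
integral `F₁₂² + F₁₃² + F₂₃² = R²`, the function
`σ(z) = z·F₁₂(z)² + F₁₃(z)² − R²/2` satisfies `σ′ = F₁₂²` and the sigma form of
the Painlevé VI equation. -/
theorem stmt_3 (I : Set ℝ) (hIopen : IsOpen I) (hIconn : I.OrdConnected)
    (h0 : (0 : ℝ) ∉ I) (h1 : (1 : ℝ) ∉ I)
    (F12 F13 F23 : ℝ → ℝ)
    (hF12 : ∀ z ∈ I, HasDerivAt F12 (F13 z * F23 z / (z * (z - 1))) z)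
    (hF13 : ∀ z ∈ I, HasDerivAt F13 (-(F12 z * F23 z) / (z - 1)) z)
    (hF23 : ∀ z ∈ I, HasDerivAt F23 (F12 z * F13 z / z) z)
    (R2 : ℝ)
    (hR2 : ∀ z ∈ I, F12 z ^ 2 + F13 z ^ 2 + F23 z ^ 2 = R2) :
    let σ : ℝ → ℝ := fun z => z * F12 z ^ 2 + F13 z ^ 2 - R2 / 2
    ∀ z ∈ I,
      deriv σ z = F12 z ^ 2 ∧
      z ^ 2 * (z - 1) ^ 2 * (deriv (deriv σ) z) ^ 2
          + 4 * (deriv σ z * (z * deriv σ z - σ z) ^ 2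
              - (deriv σ z) ^ 2 * (z * deriv σ z - σ z))
        = -2 * R2 * (deriv σ z) ^ 2 + R2 ^ 2 * deriv σ z := by
  intro σ
  have hσ' : ∀ z ∈ I, HasDerivAt σ (F12 z ^ 2) z := by
    intro z hz
    have hz0 : z ≠ 0 := fun h => h0 (h ▸ hz)
    have hz1 : z - 1 ≠ 0 := fun h => h1 (show (1:ℝ) ∈ I by rw [show (1:ℝ) = z by linarith [sub_eq_zero.mp h]]; exact hz)
    have hd : HasDerivAt σ
        (1 * F12 z ^ 2 + z * (2 * F12 z ^ 1 * (F13 z * F23 z / (z * (z - 1))))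
          + 2 * F13 z ^ 1 * (-(F12 z * F23 z) / (z - 1)) - 0) z := by
      exact (((hasDerivAt_id z).mul ((hF12 z hz).pow 2)).add
        ((hF13 z hz).pow 2)).sub (hasDerivAt_const z (R2 / 2))
    convert hd using 1
    field_simp
    ring
  intro z hz
  have hz0 : z ≠ 0 := fun h => h0 (h ▸ hz)
  have hz1 : z - 1 ≠ 0 := fun h => h1 (show (1:ℝ) ∈ I by rw [show (1:ℝ) = z by linarith [sub_eq_zero.mp h]]; exact hz)
  have hd1 : deriv σ z = F12 z ^ 2 := (hσ' z hz).deriv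
  have heq : deriv σ =ᶠ[nhds z] fun w => F12 w ^ 2 :=
    Filter.eventuallyEq_of_mem (hIopen.mem_nhds hz) (fun w hw => (hσ' w hw).deriv)
  have hd2 : deriv (deriv σ) z
      = 2 * F12 z ^ 1 * (F13 z * F23 z / (z * (z - 1))) := by
    rw [heq.deriv_eq]
    exact ((hF12 z hz).pow 2).deriv
  refine ⟨hd1, ?_⟩
  rw [hd1, hd2]
  have hr := hR2 z hz
  have hσz : σ z = z * F12 z ^ 2 + F13 z ^ 2 - R2 / 2 := rfl
  rw [hσz]
  field_simp
  linear_combination (16 * F12 z ^ 2 * F13 z ^ 2) * hr
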